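/- For every n ≥ 4, the n×n real matrix B with entries of magnitude 0 or 1 defined by: row 1 = e_2; row 2 = −e_2 + e_3; row 3 = e_1 + e_4; row i = e_1 − e_3 + e_{i+1} for 4 ≤ i ≤ n−1; and row n = e_1 − e_3 + e_n (where e_j denotes the j-th standard basis row vector of length n) is nilpotent, i.e., B^n = 0. -/

import Mathlib

open Matrix

/-- The order-`n` real matrix `B` (entries `±1, 0`), for `n ≥ 4`:
row 1 = `(0,+,0,…)`; row 2 = `(0,−,+,0,…)`; row 3 = `(+,0,0,+,0,…)`;
row `i` (for `4 ≤ i ≤ n−1`) = `(+,0,−,0,…)` with `+` in column `i+1`;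
row `n` = `(+,0,−,0,…,0,+)` with `+` in column `n` (1-based indices). -/
def patternB (n : ℕ) : Matrix (Fin n) (Fin n) ℝ :=
  Matrix.of fun i j =>
    if (i : ℕ) = 0 then (if (j : ℕ) = 1 then 1 else 0)
    else if (i : ℕ) = 1 then (if (j : ℕ) = 1 then -1 else if (j : ℕ) = 2 then 1 else 0)
    else if (i : ℕ) = 2 then (if (j : ℕ) = 0 then 1 else if (j : ℕ) = 3 then 1 else 0)
    else (if (j : ℕ) = 0 then 1 else if (j : ℕ) = 2 then -1
      else if (j : ℕ) = min ((i : ℕ) + 1) (n - 1) then 1 else 0)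

namespace Statement12Aux

variable {n : ℕ}

/-- standard basis row vector -/
def E (i : Fin n) : Fin n → ℝ := Pi.single i 1

lemma E_apply (i j : Fin n) : E i j = if (j : ℕ) = (i : ℕ) then 1 else 0 := by
  simp [E, Pi.single_apply, Fin.ext_iff]

lemma row0 (hn : 4 ≤ n) :
    patternB n ⟨0, by omega⟩ = E ⟨1, by omega⟩ := by
  funext j
  simp only [patternB, Matrix.of_apply, E_apply, Fin.val_mk]
  split_ifs <;> first | contradiction | (exfalso; omega) | norm_num

lemma row1 (hn : 4 ≤ n) :
    patternB n ⟨1, by omega⟩ = -E ⟨1, by omega⟩ + E ⟨2, by omega⟩ := by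
  funext j
  simp only [patternB, Matrix.of_apply, E_apply, Pi.add_apply, Pi.neg_apply, Fin.val_mk]
  split_ifs <;> first | contradiction | (exfalso; omega) | norm_num

lemma row2 (hn : 4 ≤ n) :
    patternB n ⟨2, by omega⟩ = E ⟨0, by omega⟩ + E ⟨3, by omega⟩ := by
  funext j
  simp only [patternB, Matrix.of_apply, E_apply, Pi.add_apply, Fin.val_mk]
  split_ifs <;> first | contradiction | (exfalso; omega) | norm_num

set_option maxHeartbeats 1000000 in
lemma rowGen (hn : 4 ≤ n) (i : Fin n) (hi : 3 ≤ (i : ℕ)) :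
    patternB n i = E ⟨0, by omega⟩ - E ⟨2, by omega⟩
      + E ⟨min ((i : ℕ) + 1) (n - 1), by omega⟩ := by
  funext j
  have hlt := i.isLt
  simp only [patternB, Matrix.of_apply, E_apply, Pi.add_apply, Pi.sub_apply, Fin.val_mk]
  split_ifs <;> first | contradiction | (exfalso; omega) | norm_num

/-- the moving vector -/
def W (hn : 4 ≤ n) (k : ℕ) : Fin n → ℝ :=
  E ⟨min (k + 1) (n - 1), by omega⟩ - E ⟨min k (n - 1), by omega⟩

set_option maxHeartbeats 1000000 in
lemma W_step (hn : 4 ≤ n) (k : ℕ) (hk : 3 ≤ k) :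
    W hn k ᵥ* patternB n = W hn (k + 1) := by
  have ha : 3 ≤ ((⟨min (k + 1) (n - 1), by omega⟩ : Fin n) : ℕ) := by
    rw [Fin.val_mk]; omega
  have hb : 3 ≤ ((⟨min k (n - 1), by omega⟩ : Fin n) : ℕ) := by
    rw [Fin.val_mk]; omega
  rw [W, Matrix.sub_vecMul, E, E, Matrix.single_one_vecMul, Matrix.single_one_vecMul, Matrix.row,
    rowGen hn _ ha, rowGen hn _ hb]
  funext j
  simp only [W, E_apply, Pi.add_apply, Pi.sub_apply, Fin.val_mk]
  split_ifs <;> first | contradiction | (exfalso; omega) | norm_num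

set_option maxHeartbeats 1000000 in
lemma chain4 (hn : 4 ≤ n) :
    E (⟨0, by omega⟩ : Fin n) ᵥ* (patternB n) ^ 4 = W hn 3 := by
  have h4 : (patternB n) ^ 4 = patternB n * patternB n * patternB n * patternB n := by
    rw [pow_succ, pow_succ, pow_succ, pow_one]
  rw [h4, ← Matrix.vecMul_vecMul, ← Matrix.vecMul_vecMul, ← Matrix.vecMul_vecMul]
  rw [E, Matrix.single_one_vecMul, Matrix.row, row0 hn, E, Matrix.single_one_vecMul, Matrix.row, row1 hn]
  simp only [Matrix.add_vecMul, Matrix.sub_vecMul, Matrix.neg_vecMul]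
  rw [E, E, Matrix.single_one_vecMul, Matrix.single_one_vecMul, Matrix.row, row1 hn, row2 hn]
  simp only [Matrix.add_vecMul, Matrix.sub_vecMul, Matrix.neg_vecMul]
  rw [E, E, E, E, Matrix.single_one_vecMul, Matrix.single_one_vecMul,
    Matrix.single_one_vecMul, Matrix.single_one_vecMul, Matrix.row, row0 hn, row1 hn, row2 hn,
    rowGen hn ⟨3, by omega⟩ (by rw [Fin.val_mk])]
  funext j
  simp only [W, E_apply, Pi.add_apply, Pi.sub_apply, Pi.neg_apply, Fin.val_mk]
  split_ifs <;> first | contradiction | (exfalso; omega) | norm_num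

lemma chainN (hn : 4 ≤ n) (j : ℕ) :
    E (⟨0, by omega⟩ : Fin n) ᵥ* (patternB n) ^ (4 + j) = W hn (3 + j) := by
  induction j with
  | zero => simpa using chain4 hn
  | succ m ih =>
    have h1 : 4 + (m + 1) = (4 + m) + 1 := by ring
    rw [h1, pow_succ, ← Matrix.vecMul_vecMul, ih]
    have h2 : 3 + (m + 1) = (3 + m) + 1 := by ring
    rw [h2]
    exact W_step hn (3 + m) (by omega)

lemma e0_chain (hn : 4 ≤ n) :
    E (⟨0, by omega⟩ : Fin n) ᵥ* (patternB n) ^ n = 0 := by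
  have h := chainN hn (n - 4)
  have h1 : 4 + (n - 4) = n := by omega
  rw [h1] at h
  rw [h, W]
  have h2 : (⟨min (3 + (n - 4) + 1) (n - 1), by omega⟩ : Fin n)
      = (⟨min (3 + (n - 4)) (n - 1), by omega⟩ : Fin n) := Fin.ext (by rw [Fin.val_mk, Fin.val_mk]; omega)
  rw [h2, sub_self]

lemma key (hn : 4 ≤ n) (x : Fin n → ℝ) (hx : x ᵥ* (patternB n) ^ n = 0) :
    (x ᵥ* patternB n) ᵥ* (patternB n) ^ n = 0 := by
  rw [Matrix.vecMul_vecMul, ← pow_succ', pow_succ, ← Matrix.vecMul_vecMul, hx,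
    Matrix.zero_vecMul]

set_option maxHeartbeats 1000000 in
lemma all_rows (hn : 4 ≤ n) : ∀ k, ∀ hk : k < n,
    E (⟨k, hk⟩ : Fin n) ᵥ* (patternB n) ^ n = 0 := by
  intro k
  induction k using Nat.strong_induction_on with
  | _ k ih =>
    intro hk
    match k, hk with
    | 0, hk => exact e0_chain hn
    | 1, hk =>
      have h0 := key hn _ (e0_chain hn)
      rwa [E, Matrix.single_one_vecMul, Matrix.row, row0 hn] at h0
    | 2, hk =>
      have h1 := key hn _ (ih 1 (by omega) (by omega))
      rw [E, Matrix.single_one_vecMul, Matrix.row, row1 hn] at h1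
      have h2 : E (⟨2, hk⟩ : Fin n) = (-E ⟨1, by omega⟩ + E ⟨2, by omega⟩) + E ⟨1, by omega⟩ := by
        funext j; simp only [Pi.add_apply, Pi.neg_apply]; ring
      rw [h2, Matrix.add_vecMul, h1, ih 1 (by omega) (by omega), add_zero]
    | 3, hk =>
      have h2 := key hn _ (ih 2 (by omega) (by omega))
      rw [E, Matrix.single_one_vecMul, Matrix.row, row2 hn] at h2
      have h3 : E (⟨3, hk⟩ : Fin n) = (E ⟨0, by omega⟩ + E ⟨3, by omega⟩) - E ⟨0, by omega⟩ := by
        funext j; simp only [Pi.add_apply, Pi.sub_apply]; ring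
      rw [h3, Matrix.sub_vecMul, h2, ih 0 (by omega) (by omega), zero_sub, neg_zero]
    | (m + 4), hk =>
      have hprev := key hn _ (ih (m + 3) (by omega) (by omega))
      rw [E, Matrix.single_one_vecMul, Matrix.row,
        rowGen hn ⟨m + 3, by omega⟩ (by rw [Fin.val_mk]; omega)] at hprev
      have hmin : (⟨min ((((⟨m + 3, by omega⟩ : Fin n)) : ℕ) + 1) (n - 1), by omega⟩ : Fin n)
          = (⟨m + 4, hk⟩ : Fin n) :=
        Fin.ext (by rw [Fin.val_mk, Fin.val_mk, Fin.val_mk]; omega)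
      rw [hmin] at hprev
      have h0 := ih 0 (by omega) (by omega)
      have h2 := ih 2 (by omega) (by omega)
      simp only [Matrix.add_vecMul, Matrix.sub_vecMul, h0, h2, zero_sub, neg_zero,
        zero_add, sub_zero] at hprev
      exact hprev

end Statement12Aux

/-- For `n ≥ 4`, the magnitude-one realization of `B_n` is nilpotent:
its `n`-th power is zero. -/
theorem statement12 (n : ℕ) (hn : 4 ≤ n) : (patternB n) ^ n = 0 := by
  ext i j
  have h := Statement12Aux.all_rows hn i.val i.isLt
  rw [Statement12Aux.E, Matrix.single_one_vecMul, Fin.eta, Matrix.row] at h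
  simp [congrFun h j]
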